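/- The function $h_2(x) = \ln\frac{\cos x}{\sin x} - \frac{x}{2\sin x} - \frac{\pi}{2}$ is strictly monotonically decreasing on $(0, \pi/2)$. -/

import Mathlib

open Real

noncomputable def h2 (x : ℝ) : ℝ :=
  Real.log (Real.cos x / Real.sin x) - x / (2 * Real.sin x) - π / 2

theorem h2_strictAntiOn : StrictAntiOn h2 (Set.Ioo 0 (π / 2)) := by
  have key : ∀ x ∈ Set.Ioo 0 (π / 2), HasDerivAt h2
      ((((-Real.sin x) * Real.sin x - Real.cos x * Real.cos x) / (Real.sin x) ^ 2 /
        (Real.cos x / Real.sin x) - (1 * (2 * Real.sin x) - x * (2 * Real.cos x)) /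
        (2 * Real.sin x) ^ 2)) x := by
    intro x hx
    have hs : 0 < Real.sin x :=
      Real.sin_pos_of_pos_of_lt_pi hx.1 (hx.2.trans (by linarith [Real.pi_pos]))
    have hc : 0 < Real.cos x := Real.cos_pos_of_mem_Ioo ⟨by linarith [hx.1, Real.pi_pos], hx.2⟩
    have h1 : HasDerivAt (fun y => Real.cos y / Real.sin y)
        (((-Real.sin x) * Real.sin x - Real.cos x * Real.cos x) / (Real.sin x) ^ 2) x :=
      (Real.hasDerivAt_cos x).div (Real.hasDerivAt_sin x) hs.ne'
    have h2' : HasDerivAt (fun y => Real.log (Real.cos y / Real.sin y))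
        (((-Real.sin x) * Real.sin x - Real.cos x * Real.cos x) / (Real.sin x) ^ 2 /
          (Real.cos x / Real.sin x)) x :=
      h1.log (by positivity)
    have h3 : HasDerivAt (fun y => y / (2 * Real.sin y))
        ((1 * (2 * Real.sin x) - x * (2 * Real.cos x)) / (2 * Real.sin x) ^ 2) x :=
      (hasDerivAt_id x).div ((Real.hasDerivAt_sin x).const_mul 2) (by positivity)
    exact (h2'.sub h3).sub_const (π / 2)
  apply strictAntiOn_of_deriv_neg (convex_Ioo _ _)
  · exact fun x hx => (key x hx).continuousAt.continuousWithinAt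
  · rw [interior_Ioo]
    intro x hx
    rw [(key x hx).deriv]
    have hs : 0 < Real.sin x :=
      Real.sin_pos_of_pos_of_lt_pi hx.1 (hx.2.trans (by linarith [Real.pi_pos]))
    have hc : 0 < Real.cos x := Real.cos_pos_of_mem_Ioo ⟨by linarith [hx.1, Real.pi_pos], hx.2⟩
    have htan : x < Real.tan x := Real.lt_tan hx.1 hx.2
    have hxc : x * Real.cos x < Real.sin x := by
      rw [Real.tan_eq_sin_div_cos] at htan
      calc x * Real.cos x < Real.sin x / Real.cos x * Real.cos x := by
            exact mul_lt_mul_of_pos_right htan hc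
        _ = Real.sin x := by field_simp
    have hA : ((-Real.sin x) * Real.sin x - Real.cos x * Real.cos x) / (Real.sin x) ^ 2 /
        (Real.cos x / Real.sin x) < 0 := by
      apply div_neg_of_neg_of_pos
      · apply div_neg_of_neg_of_pos
        · nlinarith
        · positivity
      · positivity
    have hB : 0 < (1 * (2 * Real.sin x) - x * (2 * Real.cos x)) / (2 * Real.sin x) ^ 2 := by
      apply div_pos (by nlinarith) (by positivity)
    linarith
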